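/- Let M ∈ ℝ^{L×L} be a symmetric positive semidefinite matrix with eigenvalues λ_1 ≥ λ_2 ≥ … ≥ λ_L and let G ∈ ℝ^{L×K} have as columns orthonormal eigenvectors of M corresponding to λ_1, …, λ_K. Then for every matrix P ∈ ℝ^{L×L} satisfying 0 ⪯ P ⪯ I (in the Loewner order) and tr(P) = K, one has ⟨M, GGᵀ − P⟩ ≥ (λ_K − λ_{K+1})(K − ⟨GGᵀ, P⟩), where ⟨A,B⟩ = tr(AᵀB). -/

import Mathlib

open Matrix

/-- Let `M` be a symmetric PSD `L×L` matrix with eigendecomposition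
`M = U diag(λ) Uᵀ`, eigenvalues in decreasing order, and let `G` consist of the
first `K` columns of `U` (orthonormal eigenvectors for the top `K` eigenvalues).
Then for every `P` with `0 ⪯ P ⪯ I` and `tr(P) = K`,
`⟨M, GGᵀ − P⟩ ≥ (λ_K − λ_{K+1})(K − ⟨GGᵀ, P⟩)`. -/
theorem stmt_4 (L K : ℕ) (hK0 : 0 < K) (hKL : K < L)
    (M : Matrix (Fin L) (Fin L) ℝ) (hM : M.PosSemidef)
    (lam : Fin L → ℝ) (hlam : Antitone lam)
    (U : Matrix (Fin L) (Fin L) ℝ) (hU : Uᵀ * U = 1)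
    (hdecomp : M = U * Matrix.diagonal lam * Uᵀ)
    (G : Matrix (Fin L) (Fin K) ℝ)
    (hG : ∀ i k, G i k = U i (Fin.castLE hKL.le k))
    (P : Matrix (Fin L) (Fin L) ℝ) (hP : P.PosSemidef) (hIP : (1 - P).PosSemidef)
    (htrP : P.trace = (K : ℝ)) :
    (lam ⟨K - 1, by omega⟩ - lam ⟨K, hKL⟩) * ((K : ℝ) - ((G * Gᵀ)ᵀ * P).trace)
      ≤ (Mᵀ * (G * Gᵀ - P)).trace := by
  classical
  have hUH : Uᴴ = Uᵀ := Matrix.conjTranspose_eq_transpose_of_trivial U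
  have hUU' : U * Uᵀ = 1 := mul_eq_one_comm.mp hU
  set D : Matrix (Fin L) (Fin L) ℝ := Uᵀ * P * U with hDdef
  have hD : D.PosSemidef := by
    have := hP.conjTranspose_mul_mul_same U
    rwa [hUH] at this
  have hD1 : (1 - D).PosSemidef := by
    have h := hIP.conjTranspose_mul_mul_same U
    rw [hUH] at h
    have : Uᵀ * (1 - P) * U = 1 - D := by
      rw [Matrix.mul_sub, Matrix.sub_mul, Matrix.mul_one, hU, hDdef]
    rwa [this] at h
  have hdiag : ∀ (Q : Matrix (Fin L) (Fin L) ℝ), Q.PosSemidef → ∀ i, 0 ≤ Q i i := by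
    intro Q hQ i
    have := hQ.dotProduct_mulVec_nonneg (Pi.single i 1)
    simpa [Matrix.mulVec_single, dotProduct, Pi.single_apply, ite_mul] using this
  have hd0 : ∀ i, 0 ≤ D i i := hdiag D hD
  have hd1 : ∀ i, D i i ≤ 1 := by
    intro i
    have := hdiag _ hD1 i
    have h1 : (1 - D) i i = 1 - D i i := by
      simp [Matrix.sub_apply, Matrix.one_apply]
    linarith [h1 ▸ this]
  have htrD : ∑ j, D j j = (K : ℝ) := by
    have : D.trace = P.trace := by
      rw [hDdef, Matrix.trace_mul_cycle, hUU', Matrix.one_mul]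
    rw [← htrP, ← this, Matrix.trace]
    rfl
  -- The matrix A = Uᵀ G is the first K columns of the identity
  set A : Matrix (Fin L) (Fin K) ℝ := Uᵀ * G with hAdef
  have hA : ∀ j k, A j k = if j = Fin.castLE hKL.le k then (1:ℝ) else 0 := by
    intro j k
    have h1 : A j k = (Uᵀ * U) j (Fin.castLE hKL.le k) := by
      simp [hAdef, Matrix.mul_apply, hG]
    rw [h1, hU, Matrix.one_apply]
  have hAA : ∀ j, (A * Aᵀ) j j = if (j : ℕ) < K then (1:ℝ) else 0 := by
    intro j
    rw [Matrix.mul_apply]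
    by_cases hj : (j : ℕ) < K
    · rw [if_pos hj, Finset.sum_eq_single ⟨(j : ℕ), hj⟩]
      · simp [hA, Fin.ext_iff]
      · intro k _ hk
        simp only [Matrix.transpose_apply, hA]
        rw [if_neg, mul_zero]
        intro h
        apply hk
        have : (j : ℕ) = (k : ℕ) := by rw [h]; rfl
        exact Fin.ext this.symm
      · simp
    · rw [if_neg hj, Finset.sum_eq_zero]
      intro k _
      simp only [Matrix.transpose_apply, hA]
      rw [if_neg, mul_zero]
      intro h
      apply hj
      have : (j : ℕ) = (k : ℕ) := by rw [h]; rfl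
      omega
  have trace_diag_mul : ∀ (B : Matrix (Fin L) (Fin L) ℝ),
      (Matrix.diagonal lam * B).trace = ∑ j, lam j * B j j := by
    intro B
    rw [Matrix.trace]
    simp [Matrix.diag, Matrix.diagonal_mul]
  -- trace(M * GGᵀ)
  have hT1 : (M * (G * Gᵀ)).trace = ∑ j, lam j * (if (j : ℕ) < K then (1:ℝ) else 0) := by
    have e1 : M * (G * Gᵀ) = U * (Matrix.diagonal lam * Uᵀ * (G * Gᵀ)) := by
      rw [hdecomp, Matrix.mul_assoc, Matrix.mul_assoc, Matrix.mul_assoc]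
    have e2 : Matrix.diagonal lam * Uᵀ * (G * Gᵀ) * U = Matrix.diagonal lam * (A * Aᵀ) := by
      rw [hAdef, Matrix.transpose_mul, Matrix.transpose_transpose,
        Matrix.mul_assoc (Matrix.diagonal lam), Matrix.mul_assoc (Matrix.diagonal lam),
        Matrix.mul_assoc Uᵀ, Matrix.mul_assoc Uᵀ, Matrix.mul_assoc G]
    rw [e1, Matrix.trace_mul_comm, e2, trace_diag_mul]
    exact Finset.sum_congr rfl fun j _ => by rw [hAA]
  -- trace(M * P)
  have hT2 : (M * P).trace = ∑ j, lam j * D j j := by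
    have e1 : M * P = U * (Matrix.diagonal lam * (Uᵀ * P)) := by
      rw [hdecomp, Matrix.mul_assoc, Matrix.mul_assoc]
    rw [e1, Matrix.trace_mul_comm, Matrix.mul_assoc, ← hDdef, trace_diag_mul]
  -- trace(GGᵀ P)
  have hDG : ∀ k k' : Fin K,
      (Gᵀ * P * G) k k' = D (Fin.castLE hKL.le k) (Fin.castLE hKL.le k') := by
    intro k k'
    simp only [hDdef, Matrix.mul_apply, Matrix.transpose_apply, hG]
  have hT3 : ((G * Gᵀ)ᵀ * P).trace
      = ∑ k : Fin K, D (Fin.castLE hKL.le k) (Fin.castLE hKL.le k) := by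
    have e1 : (G * Gᵀ)ᵀ * P = G * (Gᵀ * P) := by
      rw [Matrix.transpose_mul, Matrix.transpose_transpose, Matrix.mul_assoc]
    rw [e1, Matrix.trace_mul_comm, Matrix.trace]
    exact Finset.sum_congr rfl fun k _ => hDG k k
  -- reindexing sums over Fin K as sums over the filter set
  set S : Finset (Fin L) := Finset.univ.filter (fun j : Fin L => (j : ℕ) < K) with hSdef
  have hset : Finset.univ.map (Fin.castLEEmb hKL.le) = S := by
    ext j
    simp only [Finset.mem_map, Finset.mem_univ, true_and, hSdef, Finset.mem_filter,
      Fin.castLEEmb_apply]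
    constructor
    · rintro ⟨k, rfl⟩
      simpa using k.isLt
    · intro hj
      exact ⟨⟨(j : ℕ), hj⟩, Fin.ext rfl⟩
  have reindex : ∀ f : Fin L → ℝ,
      ∑ k : Fin K, f (Fin.castLE hKL.le k) = ∑ j ∈ S, f j := by
    intro f
    rw [← hset, Finset.sum_map]
    rfl
  have hScard : (S.card : ℝ) = (K : ℝ) := by
    rw [← hset, Finset.card_map, Finset.card_fin]
  -- rewrite goal
  have hMT : Mᵀ = M :=
    (Matrix.conjTranspose_eq_transpose_of_trivial M).symm.trans hM.1
  rw [hMT, Matrix.mul_sub, Matrix.trace_sub, hT1, hT2, hT3,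
    reindex (fun j => D j j)]
  -- the scalar inequality
  set a := lam ⟨K - 1, by omega⟩ with ha
  set b := lam ⟨K, hKL⟩ with hb
  have hsplit_d : ∑ j, lam j * D j j
      = ∑ j ∈ S, lam j * D j j + ∑ j ∈ Finset.univ.filter (fun j : Fin L => ¬ (j : ℕ) < K),
          lam j * D j j := by
    rw [hSdef, Finset.sum_filter_add_sum_filter_not]
  have hsplit_tr : ∑ j ∈ S, D j j + ∑ j ∈ Finset.univ.filter (fun j : Fin L => ¬ (j : ℕ) < K),
      D j j = (K : ℝ) := by
    rw [hSdef, Finset.sum_filter_add_sum_filter_not, htrD]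
  have hind : ∑ j, lam j * (if (j : ℕ) < K then (1:ℝ) else 0) = ∑ j ∈ S, lam j := by
    rw [hSdef, Finset.sum_filter]
    refine Finset.sum_congr rfl fun j _ => ?_
    by_cases h : (j : ℕ) < K <;> simp [h]
  have h1 : a * ∑ j ∈ S, (1 - D j j) ≤ ∑ j ∈ S, lam j * (1 - D j j) := by
    rw [Finset.mul_sum]
    refine Finset.sum_le_sum fun j hj => ?_
    have hjK : (j : ℕ) < K := (Finset.mem_filter.mp hj).2
    have hja : a ≤ lam j := by
      apply hlam
      rw [Fin.le_def]
      exact Nat.le_pred_of_lt hjK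
    have hnn : (0:ℝ) ≤ 1 - D j j := by linarith [hd1 j]
    nlinarith
  have h2 : ∑ j ∈ Finset.univ.filter (fun j : Fin L => ¬ (j : ℕ) < K), lam j * D j j
      ≤ b * ∑ j ∈ Finset.univ.filter (fun j : Fin L => ¬ (j : ℕ) < K), D j j := by
    rw [Finset.mul_sum]
    refine Finset.sum_le_sum fun j hj => ?_
    have hjK : ¬ (j : ℕ) < K := (Finset.mem_filter.mp hj).2
    have hjb : lam j ≤ b := by
      apply hlam
      rw [Fin.le_def]
      exact Nat.le_of_not_lt hjK
    nlinarith [hd0 j]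
  have hsum1 : ∑ j ∈ S, (1 - D j j) = (K : ℝ) - ∑ j ∈ S, D j j := by
    rw [Finset.sum_sub_distrib, Finset.sum_const, nsmul_eq_mul, mul_one, hScard]
  have hexp : ∑ j ∈ S, lam j * (1 - D j j) = ∑ j ∈ S, lam j - ∑ j ∈ S, lam j * D j j := by
    rw [← Finset.sum_sub_distrib]
    exact Finset.sum_congr rfl fun j _ => by ring
  rw [hind]
  set X : ℝ := (K : ℝ) - ∑ j ∈ S, D j j with hX
  rw [hsum1, hexp] at h1
  have hXc : ∑ j ∈ Finset.univ.filter (fun j : Fin L => ¬ (j : ℕ) < K), D j j = X := by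
    linarith [hsplit_tr, hX]
  rw [hXc] at h2
  have hg : (a - b) * X = a * X - b * X := by ring
  rw [hg]
  linarith [h1, h2, hsplit_d]
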